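/- arXiv:1609.09674 — 2 statements merged into one kernel-verified Lean document; each statement's English description precedes it below -/
import Mathlib

section
/- Let 0 < l < ℓ < r, α ∈ (0,1), λ > 0, Π* and Π₃ as follows: Π* = ((1-α)/(2α) - 1/(2λ))ℓ²·ln(r/ℓ) + (ℓ²-l²)/4 + (r²-ℓ²)/(4λ), Π₃ = (ln(ℓ/l))/(1-α) + (ln(r/ℓ))/α. Define v(x) = (2Π*/((1-α)Π₃))ln(x/l) - (x²-l²)/2 on (l,ℓ] and v(x) = (2Π*/((1-α)Π₃))ln(ℓ/l) - (ℓ²-l²)/2 + (2Π*/(αΠ₃) + ℓ²/λ - ((1-α)/α)ℓ²)·ln(x/ℓ) - (x²-ℓ²)/(2λ) on (ℓ,r). Then v(r) = 0, v is continuous at ℓ, (λ/2)(v'' + v'/x) = -1 on (ℓ,r), and (1-α)v'(ℓ⁻) = α·v'(ℓ⁺). -/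
open Set

theorem stmt_9 (l ell r α lam : ℝ) (hl : 0 < l) (hle : l < ell) (her : ell < r)
    (hα : α ∈ Set.Ioo (0:ℝ) 1) (hlam : 0 < lam)
    (Ps P₃ : ℝ)
    (hPs : Ps = ((1 - α) / (2 * α) - 1 / (2 * lam)) * ell^2 * Real.log (r / ell)
        + (ell^2 - l^2) / 4 + (r^2 - ell^2) / (4 * lam))
    (hP₃ : P₃ = Real.log (ell / l) / (1 - α) + Real.log (r / ell) / α)
    (v : ℝ → ℝ)
    (hv : ∀ x, v x = if x ≤ ell then
        (2 * Ps / ((1 - α) * P₃)) * Real.log (x / l) - (x^2 - l^2) / 2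
      else
        (2 * Ps / ((1 - α) * P₃)) * Real.log (ell / l) - (ell^2 - l^2) / 2
          + (2 * Ps / (α * P₃) + ell^2 / lam - ((1 - α) / α) * ell^2) * Real.log (x / ell)
          - (x^2 - ell^2) / (2 * lam)) :
    v r = 0 ∧ ContinuousAt v ell ∧
    (∀ x ∈ Set.Ioo ell r, (lam / 2) * (deriv (deriv v) x + deriv v x / x) = -1) ∧
    (1 - α) * derivWithin v (Set.Iio ell) ell = α * derivWithin v (Set.Ioi ell) ell := by
  obtain ⟨hα0, hα1⟩ := hα
  have hα1' : (0:ℝ) < 1 - α := by linarith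
  have hℓ0 : 0 < ell := hl.trans hle
  have hr0 : 0 < r := hℓ0.trans her
  have hP₃pos : 0 < P₃ := by
    rw [hP₃]
    exact add_pos (div_pos (Real.log_pos ((one_lt_div hl).mpr hle)) hα1')
      (div_pos (Real.log_pos ((one_lt_div hℓ0).mpr her)) hα0)
  set A := 2 * Ps / ((1 - α) * P₃) with hA
  set B := 2 * Ps / (α * P₃) + ell ^ 2 / lam - (1 - α) / α * ell ^ 2 with hB
  set C1 := A * Real.log (ell / l) - (ell ^ 2 - l ^ 2) / 2 with hC1
  set f : ℝ → ℝ := fun x => A * Real.log (x / l) - (x ^ 2 - l ^ 2) / 2 with hfdef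
  set g : ℝ → ℝ := fun x => C1 + B * Real.log (x / ell) - (x ^ 2 - ell ^ 2) / (2 * lam) with hgdef
  have hf : ∀ x ≤ ell, v x = f x := by
    intro x hx
    rw [hv x, if_pos hx]
  have hg : ∀ x, ell < x → v x = g x := by
    intro x hx
    rw [hv x, if_neg (not_le.mpr hx)]
  have hlog : ∀ (c y : ℝ), c ≠ 0 → y ≠ 0 → HasDerivAt (fun x => Real.log (x / c)) (1 / y) y := by
    intro c y hc hy
    have h := ((hasDerivAt_id y).div_const c).log (div_ne_zero hy hc)
    refine h.congr_deriv ?_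
    show 1 / c / (y / c) = 1 / y
    field_simp
  have hfd : ∀ y : ℝ, y ≠ 0 → HasDerivAt f (A / y - y) y := by
    intro y hy
    have h := ((hlog l y hl.ne' hy).const_mul A).fun_sub
      (((hasDerivAt_pow 2 y).sub_const (l ^ 2)).div_const 2)
    refine h.congr_deriv ?_
    push_cast
    field_simp
  have hgd : ∀ y : ℝ, y ≠ 0 → HasDerivAt g (B / y - y / lam) y := by
    intro y hy
    have h := ((hasDerivAt_const y C1).fun_add ((hlog ell y hℓ0.ne' hy).const_mul B)).fun_sub
      (((hasDerivAt_pow 2 y).sub_const (ell ^ 2)).div_const (2 * lam))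
    refine h.congr_deriv ?_
    push_cast
    field_simp
    ring
  have hgfℓ : f ell = g ell := by
    simp [hfdef, hgdef, hC1, div_self hℓ0.ne', Real.log_one]
  have hvg : v ell = g ell := by rw [hf ell le_rfl, hgfℓ]
  refine ⟨?_, ?_, ?_, ?_⟩
  · -- v r = 0
    have key : A * Real.log (ell / l) + 2 * Ps / (α * P₃) * Real.log (r / ell) = 2 * Ps := by
      rw [hA]
      have h2 : 2 * Ps / ((1 - α) * P₃) * Real.log (ell / l)
          + 2 * Ps / (α * P₃) * Real.log (r / ell)
          = 2 * Ps / P₃ * (Real.log (ell / l) / (1 - α) + Real.log (r / ell) / α) := by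
        field_simp [hα0.ne', hα1'.ne', hP₃pos.ne']
      rw [h2, ← hP₃, div_mul_cancel₀ _ hP₃pos.ne']
    rw [hg r her]
    simp only [hgdef, hC1, hB]
    linear_combination key + 2 * hPs
  · -- continuity
    have h1 : ContinuousWithinAt v (Set.Iic ell) ell :=
      ((hfd ell hℓ0.ne').continuousAt.continuousWithinAt).congr (fun y hy => hf y hy)
        (hf ell le_rfl)
    have h2 : ContinuousWithinAt v (Set.Ioi ell) ell :=
      ((hgd ell hℓ0.ne').continuousAt.continuousWithinAt).congr (fun y hy => hg y hy) hvg
    have h3 := h1.union h2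
    rw [Set.Iic_union_Ioi] at h3
    rwa [continuousWithinAt_univ] at h3
  · -- ODE
    rintro x ⟨hx1, hx2⟩
    have hx0 : 0 < x := hℓ0.trans hx1
    have hd1 : ∀ y ∈ Set.Ioi ell, deriv v y = B / y - y / lam := by
      intro y hy
      have hy0 : (0:ℝ) < y := hℓ0.trans hy
      have hev : v =ᶠ[nhds y] g :=
        Filter.eventually_of_mem (isOpen_Ioi.mem_nhds hy) (fun z hz => hg z hz)
      rw [hev.deriv_eq]
      exact (hgd y hy0.ne').deriv
    have hev2 : deriv v =ᶠ[nhds x] fun y => B / y - y / lam :=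
      Filter.eventually_of_mem (isOpen_Ioi.mem_nhds hx1) hd1
    have hdd : deriv (deriv v) x = -B / x ^ 2 - 1 / lam := by
      rw [hev2.deriv_eq]
      have h : HasDerivAt (fun y : ℝ => B / y - y / lam) (B * -(x ^ 2)⁻¹ - 1 / lam) x := by
        simpa [div_eq_mul_inv] using
          ((hasDerivAt_inv hx0.ne').const_mul B).fun_sub ((hasDerivAt_id x).div_const lam)
      rw [h.deriv]
      field_simp
    rw [hdd, hd1 x hx1]
    field_simp
    ring
  · -- flux condition
    have hdl : derivWithin v (Set.Iio ell) ell = A / ell - ell :=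
      (((hfd ell hℓ0.ne').hasDerivWithinAt).congr (fun y hy => hf y (le_of_lt hy))
        (hf ell le_rfl)).derivWithin (uniqueDiffWithinAt_Iio ell)
    have hdr : derivWithin v (Set.Ioi ell) ell = B / ell - ell / lam :=
      (((hgd ell hℓ0.ne').hasDerivWithinAt).congr (fun y hy => hg y hy)
        hvg).derivWithin (uniqueDiffWithinAt_Ioi ell)
    rw [hdl, hdr, hA, hB]
    field_simp
    ring
end

section
/- Let 0 < l < ℓ be fixed and let ε > 0, with r = ℓ + ε, and families α = α(ε) ∈ (0,1), λ = λ(ε) > 0 such that α(ε) → 0 and α(ε)ε/λ(ε) → 0 as ε → 0. Define C(ε) = 2Π*(ℓ+ε)/((1-α)Π₃(ℓ+ε)) with Π*(r) = ((1-α)/(2α) - 1/(2λ))ℓ² ln(r/ℓ) + (ℓ²-l²)/4 + (r²-ℓ²)/(4λ) and Π₃(r) = ln(ℓ/l)/(1-α) + ln(r/ℓ)/α. Then as ε → 0: (i) if α/ε → G ∈ (0,∞), C(ε) → (ℓ/G + (ℓ²-l²)/2)/(1/(ℓG) + ln(ℓ/l)); (ii) if α/ε → 0, C(ε) → ℓ²;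 (iii) if α/ε → ∞, C(ε) → (ℓ²-l²)/(2 ln(ℓ/l)). -/
open Filter Topology

private noncomputable def Qf (ell : ℝ) (α : ℝ → ℝ) (ε : ℝ) : ℝ :=
  Real.log ((ell + ε) / ell) / α ε

private noncomputable def Rf (ell : ℝ) (lam : ℝ → ℝ) (ε : ℝ) : ℝ :=
  (2 * ell ^ 2 * (ε / ell - Real.log ((ell + ε) / ell)) + ε ^ 2) / (2 * lam ε)

private noncomputable def Nf (l ell : ℝ) (α lam : ℝ → ℝ) (ε : ℝ) : ℝ :=
  (1 - α ε) * ell ^ 2 * Qf ell α ε + (ell ^ 2 - l ^ 2) / 2 + Rf ell lam ε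

private noncomputable def Df (l ell : ℝ) (α : ℝ → ℝ) (ε : ℝ) : ℝ :=
  Real.log (ell / l) + (1 - α ε) * Qf ell α ε

private lemma log_slope (ell : ℝ) (h : 0 < ell) :
    Tendsto (fun ε => Real.log ((ell + ε) / ell) / ε) (𝓝[>] (0:ℝ)) (𝓝 (1 / ell)) := by
  have h1 : HasDerivAt (fun x : ℝ => ell + x) 1 0 := by
    simpa using (hasDerivAt_id (0:ℝ)).const_add ell
  have hd : HasDerivAt (fun x : ℝ => Real.log (ell + x)) (1 / ell) 0 := by
    have h2 := (Real.hasDerivAt_log (by positivity : ell + (0:ℝ) ≠ 0)).comp 0 h1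
    simpa [one_div, Function.comp_def] using h2
  have h3 := hasDerivAt_iff_tendsto_slope.mp hd
  have h4 : Tendsto (slope (fun x : ℝ => Real.log (ell + x)) 0) (𝓝[>] (0:ℝ)) (𝓝 (1 / ell)) :=
    h3.mono_left (nhdsWithin_mono _ (fun x hx => ne_of_gt hx))
  refine h4.congr' ?_
  filter_upwards [self_mem_nhdsWithin] with ε (hε : 0 < ε)
  simp only [slope_def_field]
  rw [Real.log_div (by positivity) (ne_of_gt h)]
  simp [div_eq_div_iff (ne_of_gt hε)]

private lemma log_bound (ell ε : ℝ) (h : 0 < ell) (hε : 0 < ε) :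
    0 ≤ ε / ell - Real.log ((ell + ε) / ell) ∧
      ε / ell - Real.log ((ell + ε) / ell) ≤ (ε / ell) ^ 2 := by
  have ht0 : 0 < ε / ell := by positivity
  set t := ε / ell with ht
  have heq : (ell + ε) / ell = 1 + t := by
    rw [ht, add_div, div_self h.ne']
  rw [heq]
  constructor
  · have := Real.log_le_sub_one_of_pos (by linarith : (0:ℝ) < 1 + t)
    linarith
  · have h1 : Real.log ((1 + t)⁻¹) ≤ (1 + t)⁻¹ - 1 :=
      Real.log_le_sub_one_of_pos (by positivity)
    rw [Real.log_inv] at h1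
    have h2 : 1 - (1 + t)⁻¹ = t / (1 + t) := by field_simp; ring
    have h3 : t - t ^ 2 ≤ t / (1 + t) := by
      rw [le_div_iff₀ (by linarith)]
      nlinarith
    nlinarith [h1, h3]

set_option maxHeartbeats 1000000 in
theorem stmt_10 (l ell : ℝ) (hl : 0 < l) (hle : l < ell)
    (α lam : ℝ → ℝ)
    (hα : ∀ ε > (0:ℝ), α ε ∈ Set.Ioo (0:ℝ) 1)
    (hlam : ∀ ε > (0:ℝ), 0 < lam ε)
    (hα0 : Tendsto α (𝓝[>] 0) (𝓝 0))
    (hmain : Tendsto (fun ε => α ε * ε / lam ε) (𝓝[>] 0) (𝓝 0))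
    (Ps P₃ C : ℝ → ℝ)
    (hPs : ∀ ε, Ps ε = ((1 - α ε) / (2 * α ε) - 1 / (2 * lam ε)) * ell^2
        * Real.log ((ell + ε) / ell) + (ell^2 - l^2) / 4
        + ((ell + ε)^2 - ell^2) / (4 * lam ε))
    (hP₃ : ∀ ε, P₃ ε = Real.log (ell / l) / (1 - α ε) + Real.log ((ell + ε) / ell) / α ε)
    (hC : ∀ ε, C ε = 2 * Ps ε / ((1 - α ε) * P₃ ε)) :
    (∀ G : ℝ, 0 < G → Tendsto (fun ε => α ε / ε) (𝓝[>] 0) (𝓝 G) →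
      Tendsto C (𝓝[>] 0)
        (𝓝 ((ell / G + (ell^2 - l^2) / 2) / (1 / (ell * G) + Real.log (ell / l))))) ∧
    (Tendsto (fun ε => α ε / ε) (𝓝[>] 0) (𝓝 0) →
      Tendsto C (𝓝[>] 0) (𝓝 (ell^2))) ∧
    (Tendsto (fun ε => α ε / ε) (𝓝[>] 0) atTop →
      Tendsto C (𝓝[>] 0) (𝓝 ((ell^2 - l^2) / (2 * Real.log (ell / l))))) := by
  have hell : 0 < ell := hl.trans hle
  have hlogpos : 0 < Real.log (ell / l) := Real.log_pos (by rw [lt_div_iff₀ hl]; linarith)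
  have hmem : ∀ᶠ ε in 𝓝[>] (0:ℝ), (0:ℝ) < ε := self_mem_nhdsWithin
  -- key rewrite of C
  have hkey : ∀ᶠ ε in 𝓝[>] (0:ℝ), C ε = Nf l ell α lam ε / Df l ell α ε := by
    filter_upwards [hmem] with ε hε
    obtain ⟨ha0, ha1⟩ := hα ε hε
    have hlm := hlam ε hε
    have h1a : (1:ℝ) - α ε ≠ 0 := by linarith
    have hnum : 2 * Ps ε = Nf l ell α lam ε := by
      rw [hPs]; simp only [Nf, Qf, Rf]
      field_simp
      ring
    have hden : (1 - α ε) * P₃ ε = Df l ell α ε := by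
      rw [hP₃]; simp only [Df, Qf]
      field_simp
    rw [hC, hnum, hden]
  have hLE : Tendsto (fun ε => Real.log ((ell + ε) / ell) / ε) (𝓝[>] (0:ℝ)) (𝓝 (1 / ell)) :=
    log_slope ell hell
  have hRbound : ∀ ε, 0 < ε →
      0 ≤ Rf ell lam ε ∧ Rf ell lam ε ≤ (3/2) * (α ε * ε / lam ε) * (ε / α ε) := by
    intro ε hε
    obtain ⟨ha0, _⟩ := hα ε hε
    have hlm := hlam ε hε
    obtain ⟨hb1, hb2⟩ := log_bound ell ε hell hε
    have hid : ell ^ 2 * (ε / ell) ^ 2 = ε ^ 2 := by field_simp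
    constructor
    · apply div_nonneg _ (by positivity)
      nlinarith [sq_nonneg ε, sq_nonneg ell, mul_le_mul_of_nonneg_left hb1 (le_of_lt (by positivity : (0:ℝ) < 2 * ell ^ 2))]
    · have heq : (3/2) * (α ε * ε / lam ε) * (ε / α ε) = (3 * ε ^ 2) / (2 * lam ε) := by
        field_simp
      rw [heq, Rf]
      have h5 := mul_le_mul_of_nonneg_left hb2 (le_of_lt (by positivity : (0:ℝ) < 2 * ell ^ 2))
      gcongr
      nlinarith
  -- eventual equality for Q as a product
  have hQeq : ∀ᶠ ε in 𝓝[>] (0:ℝ),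
      Real.log ((ell + ε) / ell) / ε * (ε / α ε) = Qf ell α ε := by
    filter_upwards [hmem] with ε hε
    have ha := (hα ε hε).1
    simp only [Qf]
    field_simp
  refine ⟨?_, ?_, ?_⟩
  · -- case (i)
    intro G hG hratio
    have hinv : Tendsto (fun ε => ε / α ε) (𝓝[>] (0:ℝ)) (𝓝 (1 / G)) := by
      have := hratio.inv₀ (ne_of_gt hG)
      simpa [inv_div, one_div] using this
    have hRlim : Tendsto (Rf ell lam) (𝓝[>] (0:ℝ)) (𝓝 0) := by
      refine squeeze_zero' (hmem.mono fun ε hε => (hRbound ε hε).1)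
        (hmem.mono fun ε hε => (hRbound ε hε).2) ?_
      have := ((tendsto_const_nhds (x := (3/2:ℝ))).mul hmain).mul hinv
      simpa using this
    have hQlim : Tendsto (Qf ell α) (𝓝[>] (0:ℝ)) (𝓝 (1 / (ell * G))) := by
      have h1 := hLE.mul hinv
      rw [show (1:ℝ)/ell * (1/G) = 1/(ell*G) by rw [div_mul_div_comm, one_mul]] at h1
      exact Tendsto.congr' hQeq h1
    have hNlim : Tendsto (Nf l ell α lam) (𝓝[>] (0:ℝ))
        (𝓝 (ell / G + (ell ^ 2 - l ^ 2) / 2)) := by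
      have h1 : Tendsto (Nf l ell α lam) (𝓝[>] (0:ℝ))
          (𝓝 ((1 - 0) * ell ^ 2 * (1 / (ell * G)) + (ell ^ 2 - l ^ 2) / 2 + 0)) := by
        exact ((((tendsto_const_nhds.sub hα0).mul tendsto_const_nhds).mul hQlim).add
          tendsto_const_nhds).add hRlim
      have h2 : (1 - 0 : ℝ) * ell ^ 2 * (1 / (ell * G)) + (ell ^ 2 - l ^ 2) / 2 + 0
          = ell / G + (ell ^ 2 - l ^ 2) / 2 := by
        field_simp
        ring
      rwa [h2] at h1
    have hDlim : Tendsto (Df l ell α) (𝓝[>] (0:ℝ))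
        (𝓝 (Real.log (ell / l) + 1 / (ell * G))) := by
      have h1 : Tendsto (Df l ell α) (𝓝[>] (0:ℝ))
          (𝓝 (Real.log (ell / l) + (1 - 0) * (1 / (ell * G)))) := by
        exact tendsto_const_nhds.add ((tendsto_const_nhds.sub hα0).mul hQlim)
      simpa using h1
    have hDne : Real.log (ell / l) + 1 / (ell * G) ≠ 0 :=
      ne_of_gt (add_pos hlogpos (by positivity))
    have hfin : Tendsto (fun ε => Nf l ell α lam ε / Df l ell α ε) (𝓝[>] (0:ℝ))
        (𝓝 ((ell / G + (ell ^ 2 - l ^ 2) / 2) / (Real.log (ell / l) + 1 / (ell * G)))) :=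
      hNlim.div hDlim hDne
    rw [show Real.log (ell / l) + 1 / (ell * G) = 1 / (ell * G) + Real.log (ell / l)
      from add_comm _ _] at hfin
    exact Tendsto.congr' (hkey.mono fun _ h => h.symm) hfin
  · -- case (ii)
    intro hratio
    have hpos : ∀ᶠ ε in 𝓝[>] (0:ℝ), α ε / ε ∈ Set.Ioi (0:ℝ) :=
      hmem.mono fun ε hε => div_pos (hα ε hε).1 hε
    have hto : Tendsto (fun ε => α ε / ε) (𝓝[>] (0:ℝ)) (𝓝[>] (0:ℝ)) :=
      tendsto_nhdsWithin_iff.mpr ⟨hratio, hpos⟩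
    have hinvtop : Tendsto (fun ε => ε / α ε) (𝓝[>] (0:ℝ)) atTop := by
      have := tendsto_inv_nhdsGT_zero.comp hto
      simpa [Function.comp_def, inv_div] using this
    have hQtop : Tendsto (Qf ell α) (𝓝[>] (0:ℝ)) atTop := by
      have h1 := Tendsto.pos_mul_atTop (by positivity : (0:ℝ) < 1 / ell) hLE hinvtop
      exact h1.congr' hQeq
    have hQpos : ∀ᶠ ε in 𝓝[>] (0:ℝ), 0 < Qf ell α ε := hQtop.eventually_gt_atTop 0
    have hinvQ : Tendsto (fun ε => 1 / Qf ell α ε) (𝓝[>] (0:ℝ)) (𝓝 0) := by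
      simpa [one_div, Pi.inv_def] using hQtop.inv_tendsto_atTop
    have hεLg : Tendsto (fun ε => ε / Real.log ((ell + ε) / ell)) (𝓝[>] (0:ℝ)) (𝓝 ell) := by
      have := hLE.inv₀ (by positivity)
      simpa [inv_div, one_div, inv_inv] using this
    have hRQ : Tendsto (fun ε => Rf ell lam ε / Qf ell α ε) (𝓝[>] (0:ℝ)) (𝓝 0) := by
      refine squeeze_zero'
        (f := fun ε => Rf ell lam ε / Qf ell α ε)
        (g := fun ε => (3/2) * (α ε * ε / lam ε) * (ε / Real.log ((ell + ε) / ell))) ?_ ?_ ?_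
      · filter_upwards [hmem, hQpos] with ε hε hq
        exact div_nonneg (hRbound ε hε).1 hq.le
      · filter_upwards [hmem, hQpos] with ε hε hq
        have ha := (hα ε hε).1
        have hlm := hlam ε hε
        have hLgpos : 0 < Real.log ((ell + ε) / ell) :=
          Real.log_pos (by rw [lt_div_iff₀ hell]; linarith)
        have h2 := (hRbound ε hε).2
        calc Rf ell lam ε / Qf ell α ε
            = Rf ell lam ε * (α ε / Real.log ((ell + ε) / ell)) := by
              rw [Qf, div_div_eq_mul_div, mul_div_assoc]
          _ ≤ ((3/2) * (α ε * ε / lam ε) * (ε / α ε)) * (α ε / Real.log ((ell + ε) / ell)) :=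
              mul_le_mul_of_nonneg_right h2 (by positivity)
          _ = (3/2) * (α ε * ε / lam ε) * (ε / Real.log ((ell + ε) / ell)) := by
              field_simp
      · have := ((tendsto_const_nhds (x := (3/2:ℝ))).mul hmain).mul hεLg
        simpa using this
    have hDlim : Tendsto (fun ε => Df l ell α ε / Qf ell α ε) (𝓝[>] (0:ℝ)) (𝓝 1) := by
      have h1 : Tendsto (fun ε => Real.log (ell / l) * (1 / Qf ell α ε) + (1 - α ε))
          (𝓝[>] (0:ℝ)) (𝓝 (Real.log (ell / l) * 0 + (1 - 0))) :=
        (tendsto_const_nhds.mul hinvQ).add (tendsto_const_nhds.sub hα0)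
      have h2 : Tendsto (fun ε => Real.log (ell / l) * (1 / Qf ell α ε) + (1 - α ε))
          (𝓝[>] (0:ℝ)) (𝓝 1) := by simpa using h1
      refine Tendsto.congr' ?_ h2
      filter_upwards [hQpos] with ε hq
      simp only [Df]
      field_simp
    have hNlim : Tendsto (fun ε => Nf l ell α lam ε / Qf ell α ε) (𝓝[>] (0:ℝ)) (𝓝 (ell ^ 2)) := by
      have h1 : Tendsto (fun ε => (1 - α ε) * ell ^ 2 + (ell ^ 2 - l ^ 2) / 2 * (1 / Qf ell α ε)
          + Rf ell lam ε / Qf ell α ε) (𝓝[>] (0:ℝ))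
          (𝓝 ((1 - 0) * ell ^ 2 + (ell ^ 2 - l ^ 2) / 2 * 0 + 0)) :=
        (((tendsto_const_nhds.sub hα0).mul tendsto_const_nhds).add
          (tendsto_const_nhds.mul hinvQ)).add hRQ
      have h2 : Tendsto (fun ε => (1 - α ε) * ell ^ 2 + (ell ^ 2 - l ^ 2) / 2 * (1 / Qf ell α ε)
          + Rf ell lam ε / Qf ell α ε) (𝓝[>] (0:ℝ)) (𝓝 (ell ^ 2)) := by simpa using h1
      refine Tendsto.congr' ?_ h2
      filter_upwards [hQpos] with ε hq
      simp only [Nf]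
      field_simp
    have hfin : Tendsto (fun ε => Nf l ell α lam ε / Qf ell α ε / (Df l ell α ε / Qf ell α ε))
        (𝓝[>] (0:ℝ)) (𝓝 (ell ^ 2 / 1)) := hNlim.div hDlim one_ne_zero
    rw [div_one] at hfin
    refine Tendsto.congr' ?_ hfin
    filter_upwards [hkey, hQpos] with ε hc hq
    rw [div_div_div_cancel_right₀ hq.ne' (Nf l ell α lam ε) (Df l ell α ε), hc]
  · -- case (iii)
    intro hratio
    have hinv : Tendsto (fun ε => ε / α ε) (𝓝[>] (0:ℝ)) (𝓝 0) := by
      simpa [Pi.inv_def, inv_div] using hratio.inv_tendsto_atTop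
    have hRlim : Tendsto (Rf ell lam) (𝓝[>] (0:ℝ)) (𝓝 0) := by
      refine squeeze_zero' (hmem.mono fun ε hε => (hRbound ε hε).1)
        (hmem.mono fun ε hε => (hRbound ε hε).2) ?_
      have := ((tendsto_const_nhds (x := (3/2:ℝ))).mul hmain).mul hinv
      simpa using this
    have hQlim : Tendsto (Qf ell α) (𝓝[>] (0:ℝ)) (𝓝 0) := by
      have h1 := hLE.mul hinv
      rw [mul_zero] at h1
      exact Tendsto.congr' hQeq h1
    have hNlim : Tendsto (Nf l ell α lam) (𝓝[>] (0:ℝ)) (𝓝 ((ell ^ 2 - l ^ 2) / 2)) := by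
      have h1 : Tendsto (Nf l ell α lam) (𝓝[>] (0:ℝ))
          (𝓝 ((1 - 0) * ell ^ 2 * 0 + (ell ^ 2 - l ^ 2) / 2 + 0)) := by
        exact ((((tendsto_const_nhds.sub hα0).mul tendsto_const_nhds).mul hQlim).add
          tendsto_const_nhds).add hRlim
      simpa using h1
    have hDlim : Tendsto (Df l ell α) (𝓝[>] (0:ℝ)) (𝓝 (Real.log (ell / l))) := by
      have h1 : Tendsto (Df l ell α) (𝓝[>] (0:ℝ))
          (𝓝 (Real.log (ell / l) + (1 - 0) * 0)) := by
        exact tendsto_const_nhds.add ((tendsto_const_nhds.sub hα0).mul hQlim)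
      simpa using h1
    have hfin : Tendsto (fun ε => Nf l ell α lam ε / Df l ell α ε) (𝓝[>] (0:ℝ))
        (𝓝 ((ell ^ 2 - l ^ 2) / 2 / Real.log (ell / l))) := hNlim.div hDlim (ne_of_gt hlogpos)
    rw [show (ell ^ 2 - l ^ 2) / 2 / Real.log (ell / l)
      = (ell ^ 2 - l ^ 2) / (2 * Real.log (ell / l)) from div_div _ _ _] at hfin
    exact Tendsto.congr' (hkey.mono fun _ h => h.symm) hfin
end
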